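/- If f_1 and f_2 are interval swap maps of the same type a whose supports are disjoint, then there exists an interval exchange transformation g of order 2 such that f_2 = g f_1 g. -/

import Mathlib

open scoped TensorProduct

/-- An interval exchange transformation of the half-open interval `[p, q)`:
a bijection of `[p, q)` onto itself, extended by the identity outside,
which is a translation on each piece of a finite partition of `[p, q)`
into half-open intervals. -/
def IsIET (p q : ℝ) (f : ℝ → ℝ) : Prop :=
  Set.BijOn f (Set.Ico p q) (Set.Ico p q) ∧
  (∀ x, x ∉ Set.Ico p q → f x = x) ∧
  ∃ (n : ℕ) (pt : Fin (n + 1) → ℝ),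
    StrictMono pt ∧ pt 0 = p ∧ pt (Fin.last n) = q ∧
    ∀ i : Fin n, ∃ t : ℝ,
      ∀ x ∈ Set.Ico (pt i.castSucc) (pt i.succ), f x = x + t

/-- A restricted rotation of type `(a, b)` on `[p, q)`: it exchanges two
adjacent half-open intervals of lengths `a` (on the left) and `b` (on the
right) by translation, fixing the rest of the line. -/
def IsRestrictedRotation (p q a b : ℝ) (f : ℝ → ℝ) : Prop :=
  0 < a ∧ 0 < b ∧ ∃ x : ℝ, p ≤ x ∧ x + a + b ≤ q ∧
    (∀ y ∈ Set.Ico x (x + a), f y = y + b) ∧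
    (∀ y ∈ Set.Ico (x + a) (x + a + b), f y = y - a) ∧
    (∀ y, y ∉ Set.Ico x (x + a + b) → f y = y)

/-- An interval swap map of type `a` on `[p, q)`: it interchanges two
disjoint half-open intervals of length `a` by translation, fixing the
rest of the line. -/
def IsIntervalSwap (p q a : ℝ) (f : ℝ → ℝ) : Prop :=
  0 < a ∧ ∃ x y : ℝ, p ≤ x ∧ x + a ≤ y ∧ y + a ≤ q ∧
    (∀ z ∈ Set.Ico x (x + a), f z = z + (y - x)) ∧
    (∀ z ∈ Set.Ico y (y + a), f z = z - (y - x)) ∧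
    (∀ z, z ∉ Set.Ico x (x + a) ∪ Set.Ico y (y + a) → f z = z)

/-- `f` is a finite product (composition) of interval swap maps on `[p, q)`. -/
def IsSwapProduct (p q : ℝ) (f : ℝ → ℝ) : Prop :=
  ∃ L : List (ℝ → ℝ), (∀ g ∈ L, ∃ a, IsIntervalSwap p q a g) ∧
    f = L.foldr (· ∘ ·) id

/-- `ξ ∈ ℝ ⊗[ℚ] ℝ` is the SAF sum of `f` computed from some partition of
`[p, q)` into half-open intervals on each of which `f` is a translation. -/
def HasSAF (p q : ℝ) (f : ℝ → ℝ) (ξ : ℝ ⊗[ℚ] ℝ) : Prop :=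
  ∃ (n : ℕ) (pt : Fin (n + 1) → ℝ) (t : Fin n → ℝ),
    StrictMono pt ∧ pt 0 = p ∧ pt (Fin.last n) = q ∧
    (∀ i : Fin n, ∀ x ∈ Set.Ico (pt i.castSucc) (pt i.succ), f x = x + t i) ∧
    ξ = ∑ i : Fin n, (pt i.succ - pt i.castSucc) ⊗ₜ[ℚ] t i


noncomputable section SwapConjAux

open Classical in
/-- Auxiliary involution: swaps `[x₁, x₁+a)` with `[x₂, x₂+a)` and
`[y₁, y₁+a)` with `[y₂, y₂+a)` by translations, fixing the rest. -/
def conjFun (a x₁ x₂ y₁ y₂ z : ℝ) : ℝ :=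
  if x₁ ≤ z ∧ z < x₁ + a then z + (x₂ - x₁)
  else if x₂ ≤ z ∧ z < x₂ + a then z + (x₁ - x₂)
  else if y₁ ≤ z ∧ z < y₁ + a then z + (y₂ - y₁)
  else if y₂ ≤ z ∧ z < y₂ + a then z + (y₁ - y₂)
  else z

lemma conjFun_x₁ {a x₁ x₂ y₁ y₂ z : ℝ} (hz : x₁ ≤ z ∧ z < x₁ + a) :
    conjFun a x₁ x₂ y₁ y₂ z = z + (x₂ - x₁) := by
  simp only [conjFun, if_pos hz]

lemma conjFun_x₂ {a x₁ x₂ y₁ y₂ z : ℝ} (dxx : x₁ + a ≤ x₂ ∨ x₂ + a ≤ x₁)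
    (hz : x₂ ≤ z ∧ z < x₂ + a) :
    conjFun a x₁ x₂ y₁ y₂ z = z + (x₁ - x₂) := by
  simp only [conjFun]
  rw [if_neg, if_pos hz]
  rintro ⟨h1, h2⟩; rcases dxx with h | h <;> linarith [hz.1, hz.2]

lemma conjFun_y₁ {a x₁ x₂ y₁ y₂ z : ℝ} (hxy1 : x₁ + a ≤ y₁)
    (dyx : y₁ + a ≤ x₂ ∨ x₂ + a ≤ y₁) (hz : y₁ ≤ z ∧ z < y₁ + a) :
    conjFun a x₁ x₂ y₁ y₂ z = z + (y₂ - y₁) := by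
  simp only [conjFun]
  rw [if_neg, if_neg, if_pos hz]
  · rintro ⟨h1, h2⟩; rcases dyx with h | h <;> linarith [hz.1, hz.2]
  · rintro ⟨h1, h2⟩; linarith [hz.1, hz.2]

lemma conjFun_y₂ {a x₁ x₂ y₁ y₂ z : ℝ} (dxy : x₁ + a ≤ y₂ ∨ y₂ + a ≤ x₁)
    (hxy2 : x₂ + a ≤ y₂) (dyy : y₁ + a ≤ y₂ ∨ y₂ + a ≤ y₁)
    (hz : y₂ ≤ z ∧ z < y₂ + a) :
    conjFun a x₁ x₂ y₁ y₂ z = z + (y₁ - y₂) := by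
  simp only [conjFun]
  rw [if_neg, if_neg, if_neg, if_pos hz]
  · rintro ⟨h1, h2⟩; rcases dyy with h | h <;> linarith [hz.1, hz.2]
  · rintro ⟨h1, h2⟩; linarith [hz.1, hz.2]
  · rintro ⟨h1, h2⟩; rcases dxy with h | h <;> linarith [hz.1, hz.2]

lemma conjFun_out {a x₁ x₂ y₁ y₂ z : ℝ}
    (h1 : ¬(x₁ ≤ z ∧ z < x₁ + a)) (h2 : ¬(x₂ ≤ z ∧ z < x₂ + a))
    (h3 : ¬(y₁ ≤ z ∧ z < y₁ + a)) (h4 : ¬(y₂ ≤ z ∧ z < y₂ + a)) :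
    conjFun a x₁ x₂ y₁ y₂ z = z := by
  simp only [conjFun, if_neg h1, if_neg h2, if_neg h3, if_neg h4]

/-- Disjointness of supports forces the intervals apart. -/
lemma disj_pair {f₁ f₂ : ℝ → ℝ} {s t a b₁ b₂ : ℝ} (ha : 0 < a)
    (hb₁ : b₁ ≠ 0) (hb₂ : b₂ ≠ 0)
    (H₁ : ∀ z, s ≤ z → z < s + a → f₁ z = z + b₁)
    (H₂ : ∀ z, t ≤ z → z < t + a → f₂ z = z + b₂)
    (hdisj : Disjoint {x | f₁ x ≠ x} {x | f₂ x ≠ x}) :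
    s + a ≤ t ∨ t + a ≤ s := by
  by_contra h
  push_neg at h
  obtain ⟨h1, h2⟩ := h
  set w := max s t with hw
  have hws : s ≤ w := le_max_left _ _
  have hwt : t ≤ w := le_max_right _ _
  have hw1 : w < s + a := max_lt (by linarith) h1
  have hw2 : w < t + a := max_lt h2 (by linarith)
  have m1 : w ∈ {x | f₁ x ≠ x} := by
    simp only [Set.mem_setOf_eq, H₁ w hws hw1]
    intro hc; apply hb₁; linarith
  have m2 : w ∈ {x | f₂ x ≠ x} := by
    simp only [Set.mem_setOf_eq, H₂ w hwt hw2]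
    intro hc; apply hb₂; linarith
  exact Set.disjoint_left.mp hdisj m1 m2

end SwapConjAux

/-- Two interval swap maps of the same type with disjoint supports are
conjugate by an interval exchange transformation of order `2`. -/
theorem swaps_conjugate_by_involution (p q a : ℝ) (f₁ f₂ : ℝ → ℝ)
    (h₁ : IsIntervalSwap p q a f₁) (h₂ : IsIntervalSwap p q a f₂)
    (hdisj : Disjoint {x | f₁ x ≠ x} {x | f₂ x ≠ x}) :
    ∃ g : ℝ → ℝ, IsIET p q g ∧ g ∘ g = id ∧ g ≠ id ∧
      f₂ = g ∘ f₁ ∘ g := by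
  classical
  obtain ⟨ha, x₁, y₁, hpx₁, hxy1, hy₁q, hf₁X, hf₁Y, hf₁out⟩ := h₁
  obtain ⟨-, x₂, y₂, hpx₂, hxy2, hy₂q, hf₂X, hf₂Y, hf₂out⟩ := h₂
  have H1X : ∀ z, x₁ ≤ z → z < x₁ + a → f₁ z = z + (y₁ - x₁) :=
    fun z u v => hf₁X z ⟨u, v⟩
  have H1Y : ∀ z, y₁ ≤ z → z < y₁ + a → f₁ z = z + (x₁ - y₁) :=
    fun z u v => by rw [hf₁Y z ⟨u, v⟩]; ring
  have H2X : ∀ z, x₂ ≤ z → z < x₂ + a → f₂ z = z + (y₂ - x₂) :=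
    fun z u v => hf₂X z ⟨u, v⟩
  have H2Y : ∀ z, y₂ ≤ z → z < y₂ + a → f₂ z = z + (x₂ - y₂) :=
    fun z u v => by rw [hf₂Y z ⟨u, v⟩]; ring
  have hb1X : y₁ - x₁ ≠ 0 := by intro h; linarith
  have hb1Y : x₁ - y₁ ≠ 0 := by intro h; linarith
  have hb2X : y₂ - x₂ ≠ 0 := by intro h; linarith
  have hb2Y : x₂ - y₂ ≠ 0 := by intro h; linarith
  have dxx := disj_pair ha hb1X hb2X H1X H2X hdisj
  have dxy := disj_pair ha hb1X hb2Y H1X H2Y hdisj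
  have dyx := disj_pair ha hb1Y hb2X H1Y H2X hdisj
  have dyy := disj_pair ha hb1Y hb2Y H1Y H2Y hdisj
  have fix₁ : ∀ z, f₂ z ≠ z → f₁ z = z := by
    intro z h; by_contra h'; exact Set.disjoint_left.mp hdisj h' h
  have fix₂ : ∀ z, f₁ z ≠ z → f₂ z = z := by
    intro z h; by_contra h'; exact Set.disjoint_left.mp hdisj h h'
  set g : ℝ → ℝ := conjFun a x₁ x₂ y₁ y₂ with hgdef
  have gx₁ : ∀ z, x₁ ≤ z → z < x₁ + a → g z = z + (x₂ - x₁) :=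
    fun z u v => conjFun_x₁ ⟨u, v⟩
  have gx₂ : ∀ z, x₂ ≤ z → z < x₂ + a → g z = z + (x₁ - x₂) :=
    fun z u v => conjFun_x₂ dxx ⟨u, v⟩
  have gy₁ : ∀ z, y₁ ≤ z → z < y₁ + a → g z = z + (y₂ - y₁) :=
    fun z u v => conjFun_y₁ hxy1 dyx ⟨u, v⟩
  have gy₂ : ∀ z, y₂ ≤ z → z < y₂ + a → g z = z + (y₁ - y₂) :=
    fun z u v => conjFun_y₂ dxy hxy2 dyy ⟨u, v⟩
  have gout : ∀ z, ¬(x₁ ≤ z ∧ z < x₁ + a) → ¬(x₂ ≤ z ∧ z < x₂ + a) →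
      ¬(y₁ ≤ z ∧ z < y₁ + a) → ¬(y₂ ≤ z ∧ z < y₂ + a) → g z = z :=
    fun z h1 h2 h3 h4 => conjFun_out h1 h2 h3 h4
  have ginv : ∀ z, g (g z) = z := by
    intro z
    by_cases c1 : x₁ ≤ z ∧ z < x₁ + a
    · obtain ⟨u, v⟩ := c1
      rw [gx₁ z u v, gx₂ (z + (x₂ - x₁)) (by linarith) (by linarith)]; ring
    by_cases c2 : x₂ ≤ z ∧ z < x₂ + a
    · obtain ⟨u, v⟩ := c2
      rw [gx₂ z u v, gx₁ (z + (x₁ - x₂)) (by linarith) (by linarith)]; ring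
    by_cases c3 : y₁ ≤ z ∧ z < y₁ + a
    · obtain ⟨u, v⟩ := c3
      rw [gy₁ z u v, gy₂ (z + (y₂ - y₁)) (by linarith) (by linarith)]; ring
    by_cases c4 : y₂ ≤ z ∧ z < y₂ + a
    · obtain ⟨u, v⟩ := c4
      rw [gy₂ z u v, gy₁ (z + (y₁ - y₂)) (by linarith) (by linarith)]; ring
    · rw [gout z c1 c2 c3 c4, gout z c1 c2 c3 c4]
  have hmaps : ∀ z, p ≤ z → z < q → p ≤ g z ∧ g z < q := by
    intro z hz1 hz2
    by_cases c1 : x₁ ≤ z ∧ z < x₁ + a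
    · obtain ⟨u, v⟩ := c1; rw [gx₁ z u v]; constructor <;> linarith
    by_cases c2 : x₂ ≤ z ∧ z < x₂ + a
    · obtain ⟨u, v⟩ := c2; rw [gx₂ z u v]; constructor <;> linarith
    by_cases c3 : y₁ ≤ z ∧ z < y₁ + a
    · obtain ⟨u, v⟩ := c3; rw [gy₁ z u v]; constructor <;> linarith
    by_cases c4 : y₂ ≤ z ∧ z < y₂ + a
    · obtain ⟨u, v⟩ := c4; rw [gy₂ z u v]; constructor <;> linarith
    · rw [gout z c1 c2 c3 c4]; exact ⟨hz1, hz2⟩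
  have hmt : Set.MapsTo g (Set.Ico p q) (Set.Ico p q) := by
    intro z hz
    obtain ⟨u, v⟩ := Set.mem_Ico.mp hz
    exact Set.mem_Ico.mpr (hmaps z u v)
  -- the partition
  have hpq : p < q := by linarith
  set S : Finset ℝ := {p, x₁, x₁ + a, y₁, y₁ + a, x₂, x₂ + a, y₂, y₂ + a, q}
    with hS
  have hmemS : ∀ s ∈ S, p ≤ s ∧ s ≤ q := by
    intro s hs
    simp only [hS, Finset.mem_insert, Finset.mem_singleton] at hs
    rcases hs with rfl | rfl | rfl | rfl | rfl | rfl | rfl | rfl | rfl | rfl <;>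
      constructor <;> linarith
  have hpS : p ∈ S := by simp [hS]
  have hqS : q ∈ S := by simp [hS]
  have hx₁S : x₁ ∈ S := by simp [hS]
  have hx₁aS : x₁ + a ∈ S := by simp [hS]
  have hy₁S : y₁ ∈ S := by simp [hS]
  have hy₁aS : y₁ + a ∈ S := by simp [hS]
  have hx₂S : x₂ ∈ S := by simp [hS]
  have hx₂aS : x₂ + a ∈ S := by simp [hS]
  have hy₂S : y₂ ∈ S := by simp [hS]
  have hy₂aS : y₂ + a ∈ S := by simp [hS]
  have hcard : S.card = (S.card - 1) + 1 := by
    have : 0 < S.card := Finset.card_pos.mpr ⟨p, hpS⟩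
    omega
  set n := S.card - 1 with hn
  let e : Fin (n + 1) ≃o {x // x ∈ S} := S.orderIsoOfFin hcard
  set pt : Fin (n + 1) → ℝ := fun i => (e i : ℝ) with hptdef
  have hptmono : StrictMono pt := fun i j hij =>
    Subtype.coe_lt_coe.mpr (e.strictMono hij)
  have hptS : ∀ i, pt i ∈ S := fun i => (e i).2
  have hpt0 : pt 0 = p := by
    apply le_antisymm
    · have h := e.monotone (Fin.zero_le (e.symm ⟨p, hpS⟩))
      have h2 : e (e.symm ⟨p, hpS⟩) = ⟨p, hpS⟩ := e.apply_symm_apply _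
      have h3 := Subtype.coe_le_coe.mpr h
      rw [h2] at h3
      exact h3
    · exact (hmemS _ (hptS 0)).1
  have hptlast : pt (Fin.last n) = q := by
    apply le_antisymm
    · exact (hmemS _ (hptS (Fin.last n))).2
    · have h := e.monotone (Fin.le_last (e.symm ⟨q, hqS⟩))
      have h2 : e (e.symm ⟨q, hqS⟩) = ⟨q, hqS⟩ := e.apply_symm_apply _
      have h3 := Subtype.coe_le_coe.mpr h
      rw [h2] at h3
      exact h3
  have hcons : ∀ (i : Fin n) (s : ℝ), s ∈ S →
      ¬(pt i.castSucc < s ∧ s < pt i.succ) := by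
    rintro i s hs ⟨hl, hr⟩
    set j := e.symm ⟨s, hs⟩ with hj
    have hes : (e j : ℝ) = s := by rw [hj, e.apply_symm_apply]
    have h1 : i.castSucc < j := by
      apply e.lt_iff_lt.mp
      apply Subtype.coe_lt_coe.mp
      rw [hes]
      exact hl
    have h2 : j < i.succ := by
      apply e.lt_iff_lt.mp
      apply Subtype.coe_lt_coe.mp
      rw [hes]
      exact hr
    rw [Fin.lt_def] at h1 h2
    simp only [Fin.coe_castSucc, Fin.val_succ] at h1 h2
    omega
  have hpieces : ∀ i : Fin n, ∃ t : ℝ,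
      ∀ x ∈ Set.Ico (pt i.castSucc) (pt i.succ), g x = x + t := by
    intro i
    set c := pt i.castSucc with hc
    set d := pt i.succ with hd
    have hcd : c < d := hptmono (Fin.castSucc_lt_succ (i := i))
    have key1 : ∀ u v : ℝ, v ∈ S → u ≤ c → c < v →
        ∀ z, c ≤ z → z < d → u ≤ z ∧ z < v := by
      intro u v hv hu hcv z hz1 hz2
      refine ⟨le_trans hu hz1, ?_⟩
      rcases lt_or_ge z v with h | h
      · exact h
      · exact absurd ⟨hcv, lt_of_le_of_lt h hz2⟩ (hcons i v hv)
    have key2 : ∀ u v : ℝ, u ∈ S → ¬(u ≤ c ∧ c < v) →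
        ∀ z, c ≤ z → z < d → ¬(u ≤ z ∧ z < v) := by
      rintro u v hu hnot z hz1 hz2 ⟨h1, h2⟩
      rcases le_or_gt u c with h | h
      · exact hnot ⟨h, lt_of_le_of_lt hz1 h2⟩
      · exact (hcons i u hu) ⟨h, lt_of_le_of_lt h1 hz2⟩
    by_cases c1 : x₁ ≤ c ∧ c < x₁ + a
    · refine ⟨x₂ - x₁, fun z hz => ?_⟩
      obtain ⟨u, v⟩ := key1 x₁ (x₁ + a) hx₁aS c1.1 c1.2 z hz.1 hz.2
      exact gx₁ z u v
    by_cases c2 : x₂ ≤ c ∧ c < x₂ + a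
    · refine ⟨x₁ - x₂, fun z hz => ?_⟩
      obtain ⟨u, v⟩ := key1 x₂ (x₂ + a) hx₂aS c2.1 c2.2 z hz.1 hz.2
      exact gx₂ z u v
    by_cases c3 : y₁ ≤ c ∧ c < y₁ + a
    · refine ⟨y₂ - y₁, fun z hz => ?_⟩
      obtain ⟨u, v⟩ := key1 y₁ (y₁ + a) hy₁aS c3.1 c3.2 z hz.1 hz.2
      exact gy₁ z u v
    by_cases c4 : y₂ ≤ c ∧ c < y₂ + a
    · refine ⟨y₁ - y₂, fun z hz => ?_⟩
      obtain ⟨u, v⟩ := key1 y₂ (y₂ + a) hy₂aS c4.1 c4.2 z hz.1 hz.2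
      exact gy₂ z u v
    · refine ⟨0, fun z hz => ?_⟩
      rw [gout z (key2 x₁ (x₁ + a) hx₁S c1 z hz.1 hz.2)
        (key2 x₂ (x₂ + a) hx₂S c2 z hz.1 hz.2)
        (key2 y₁ (y₁ + a) hy₁S c3 z hz.1 hz.2)
        (key2 y₂ (y₂ + a) hy₂S c4 z hz.1 hz.2)]
      ring
  refine ⟨g, ⟨⟨hmt, ?_, ?_⟩, ?_, n, pt, hptmono, hpt0, hptlast, hpieces⟩,
    funext ginv, ?_, ?_⟩
  · -- InjOn
    intro z _ w _ h
    calc z = g (g z) := (ginv z).symm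
      _ = g (g w) := by rw [h]
      _ = w := ginv w
  · -- SurjOn
    intro w hw
    exact ⟨g w, hmt hw, ginv w⟩
  · -- fixes outside [p, q)
    intro z hz
    rw [Set.mem_Ico, not_and_or, not_le, not_lt] at hz
    apply gout <;> rintro ⟨u, v⟩ <;> rcases hz with h | h <;> linarith
  · -- g ≠ id
    intro h
    have h1 := congrFun h x₁
    rw [gx₁ x₁ le_rfl (by linarith), id_eq] at h1
    rcases dxx with h2 | h2 <;> linarith
  · -- conjugation
    funext z
    show f₂ z = g (f₁ (g z))
    by_cases c1 : x₁ ≤ z ∧ z < x₁ + a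
    · obtain ⟨u, v⟩ := c1
      have hf2z : f₂ z = z := by
        apply fix₂; rw [H1X z u v]; intro hc; linarith
      have hf1fix : f₁ (z + (x₂ - x₁)) = z + (x₂ - x₁) := by
        apply fix₁; rw [H2X (z + (x₂ - x₁)) (by linarith) (by linarith)]
        intro hc; linarith
      rw [gx₁ z u v, hf1fix, gx₂ (z + (x₂ - x₁)) (by linarith) (by linarith),
        hf2z]
      ring
    by_cases c2 : x₂ ≤ z ∧ z < x₂ + a
    · obtain ⟨u, v⟩ := c2
      rw [gx₂ z u v, H1X (z + (x₁ - x₂)) (by linarith) (by linarith),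
        gy₁ (z + (x₁ - x₂) + (y₁ - x₁)) (by linarith) (by linarith),
        H2X z u v]
      ring
    by_cases c3 : y₁ ≤ z ∧ z < y₁ + a
    · obtain ⟨u, v⟩ := c3
      have hf2z : f₂ z = z := by
        apply fix₂; rw [H1Y z u v]; intro hc; linarith
      have hf1fix : f₁ (z + (y₂ - y₁)) = z + (y₂ - y₁) := by
        apply fix₁; rw [H2Y (z + (y₂ - y₁)) (by linarith) (by linarith)]
        intro hc; linarith
      rw [gy₁ z u v, hf1fix, gy₂ (z + (y₂ - y₁)) (by linarith) (by linarith),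
        hf2z]
      ring
    by_cases c4 : y₂ ≤ z ∧ z < y₂ + a
    · obtain ⟨u, v⟩ := c4
      rw [gy₂ z u v, H1Y (z + (y₁ - y₂)) (by linarith) (by linarith),
        gx₁ (z + (y₁ - y₂) + (x₁ - y₁)) (by linarith) (by linarith),
        H2Y z u v]
      ring
    · have hf1z : f₁ z = z := by
        apply hf₁out
        rintro (⟨u, v⟩ | ⟨u, v⟩)
        · exact c1 ⟨u, v⟩
        · exact c3 ⟨u, v⟩
      have hf2z : f₂ z = z := by
        apply hf₂out
        rintro (⟨u, v⟩ | ⟨u, v⟩)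
        · exact c2 ⟨u, v⟩
        · exact c4 ⟨u, v⟩
      rw [gout z c1 c2 c3 c4, hf1z, gout z c1 c2 c3 c4, hf2z]
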